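/- For an endofunctor Σ on a category C with finite coproducts and colimits of ω-chains, where Σ preserves both, the free Σ-algebra on an object X is carried by the initial algebra μY.(X + Σ Y), with structure map given by the composite of the second coproduct injection with the initial-algebra structure map, and the unit of the free–forgetful adjunction at X is the composite of the first injection with the structure map. -/

import Mathlib

open CategoryTheory CategoryTheory.Limits

universe v u

variable {C : Type u} [Category.{v} C]

/-- The endofunctor `Y ↦ X ⨿ F Y`. -/
@[simps]
noncomputable def plusF [HasBinaryCoproducts C] (F : C ⥤ C) (X : C) : C ⥤ C where
  obj Y := X ⨿ F.obj Y
  map f := coprod.map (𝟙 X) (F.map f)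

namespace FreeAlgAux

set_option linter.unusedSectionVars false

section Adamek

variable (G : C ⥤ C) [HasInitial C] [HasColimitsOfShape ℕ C]

/-- Objects of the initial chain `⊥ → G ⊥ → G² ⊥ → ⋯`. -/
noncomputable def chainObj : ℕ → C
  | 0 => ⊥_ C
  | n + 1 => G.obj (chainObj n)

/-- Maps of the initial chain. -/
noncomputable def chainMap : ∀ n : ℕ, chainObj G n ⟶ chainObj G (n + 1)
  | 0 => initial.to _
  | n + 1 => G.map (chainMap n)

/-- The initial chain as a functor `ℕ ⥤ C`. -/
noncomputable def chain : ℕ ⥤ C := Functor.ofSequence (chainMap G)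

lemma chain_map_succ (n : ℕ) :
    (chain G).map (homOfLE (Nat.le_add_right n 1)) = chainMap G n :=
  Functor.ofSequence_map_homOfLE_succ _ n

variable {G}

section

variable {B : C} (b : G.obj B ⟶ B)

/-- The canonical cocone maps from the chain to an algebra `(B, b)`. -/
noncomputable def toAlg : ∀ n : ℕ, chainObj G n ⟶ B
  | 0 => initial.to _
  | n + 1 => G.map (toAlg n) ≫ b

lemma chainMap_toAlg (n : ℕ) : chainMap G n ≫ toAlg b (n + 1) = toAlg b n := by
  induction n with
  | zero => apply Subsingleton.elim (α := (⊥_ C ⟶ B))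
  | succ n ih =>
    show G.map (chainMap G n) ≫ G.map (toAlg b (n + 1)) ≫ b = G.map (toAlg b n) ≫ b
    rw [← Category.assoc, ← G.map_comp, ih]

/-- The cocone over the chain with apex an algebra. -/
noncomputable def coconeToAlg : Cocone (chain G) where
  pt := B
  ι := NatTrans.ofSequence (fun n => toAlg b n) (by
    intro n
    rw [chain_map_succ]
    exact (chainMap_toAlg b n).trans (Category.comp_id _).symm)

@[simp] lemma coconeToAlg_ι_app (n : ℕ) : (coconeToAlg b).ι.app n = toAlg b n := rfl

end

variable (G) in
/-- Adámek's theorem: an endofunctor preserving colimits of `ω`-chains has an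
initial algebra, carried by the colimit of the initial chain. -/
theorem adamek
    (hG : ∀ (c : Cocone (chain G)), IsColimit c → IsColimit (G.mapCocone c)) :
    ∃ M : Endofunctor.Algebra G, Nonempty (IsInitial M) := by
  let c : Cocone (chain G) := colimit.cocone (chain G)
  have hc : IsColimit c := colimit.isColimit _
  have hGc : IsColimit (G.mapCocone c) := hG c hc
  have shiftmap : ∀ n : ℕ, (chain G ⋙ G).map (homOfLE (Nat.le_add_right n 1))
      = (chain G).map (homOfLE (Nat.le_add_right (n + 1) 1)) := by
    intro n
    show G.map ((chain G).map _) = _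
    rw [chain_map_succ, chain_map_succ]
    rfl
  -- the shifted cocone
  let sh : Cocone (chain G ⋙ G) :=
    { pt := c.pt
      ι := NatTrans.ofSequence (fun n => c.ι.app (n + 1)) (by
        intro n
        have h2 := c.ι.naturality (homOfLE (Nat.le_add_right (n + 1) 1))
        simp only [Functor.const_obj_obj, Functor.const_obj_map, Category.comp_id] at h2 ⊢
        rw [shiftmap]
        exact h2.trans (Category.comp_id _).symm) }
  have sh_app : ∀ n, sh.ι.app n = c.ι.app (n + 1) := fun n => rfl
  let str : G.obj c.pt ⟶ c.pt := hGc.desc sh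
  have str_fac : ∀ n : ℕ, G.map (c.ι.app n) ≫ str = c.ι.app (n + 1) := fun n => hGc.fac sh n
  let M : Endofunctor.Algebra G := ⟨c.pt, str⟩
  -- the morphism to an arbitrary algebra
  have ι_comp : ∀ (B : Endofunctor.Algebra G) (h : M ⟶ B) (n : ℕ),
      c.ι.app n ≫ h.f = toAlg B.str n := by
    intro B h n
    induction n with
    | zero => apply Subsingleton.elim (α := ((⊥_ C) ⟶ B.a))
    | succ n ih =>
      rw [← str_fac n]
      erw [Category.assoc]
      have hh : str ≫ h.f = G.map h.f ≫ B.str := h.h.symm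
      erw [hh, ← Category.assoc, ← G.map_comp, ih]
      rfl
  refine ⟨M, ⟨IsInitial.ofUniqueHom (fun B => ?_) (fun B m => ?_)⟩⟩
  · -- existence of a morphism to any algebra B
    refine ⟨hc.desc (coconeToAlg B.str), ?_⟩
    -- algebra morphism condition, checked on the colimit G.mapCocone c
    apply hGc.hom_ext
    intro n
    simp only [Functor.mapCocone_ι_app]
    erw [← Category.assoc, ← Category.assoc, ← G.map_comp, hc.fac (coconeToAlg B.str) n,
      str_fac n, hc.fac (coconeToAlg B.str) (n + 1)]
    simp only [coconeToAlg_ι_app]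
    rfl
  · -- uniqueness
    ext
    apply hc.hom_ext
    intro n
    erw [ι_comp B m n, hc.fac (coconeToAlg B.str) n]
    rfl

end Adamek

section PlusF

/-- `Y ↦ X ⨿ F Y` maps colimit cocones of `ℕ`-chains to colimit cocones. -/
noncomputable def plusFPreserves [HasBinaryCoproducts C] (F : C ⥤ C)
    [PreservesColimitsOfShape ℕ F] (X : C) {D : ℕ ⥤ C} {c : Cocone D}
    (hc : IsColimit c) : IsColimit ((plusF F X).mapCocone c) := by
  have hF : IsColimit (F.mapCocone c) := isColimitOfPreserves F hc
  have inl_const : ∀ (s : Cocone (D ⋙ plusF F X)) (n : ℕ),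
      coprod.inl ≫ s.ι.app n = coprod.inl ≫ s.ι.app 0 := by
    intro s n
    induction n with
    | zero => rfl
    | succ n ih =>
      have h := s.ι.naturality (homOfLE (Nat.le_add_right n 1))
      simp only [Functor.const_obj_obj, Functor.const_obj_map, Category.comp_id] at h
      rw [← ih, ← h]
      simp
      erw [coprod.inl_map_assoc, Category.id_comp]
  -- the cocone over `D ⋙ F` induced by a cocone over `D ⋙ plusF F X`
  let sF : (s : Cocone (D ⋙ plusF F X)) → Cocone (D ⋙ F) := fun s =>
    { pt := s.pt
      ι := { app := fun n => coprod.inr ≫ s.ι.app n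
             naturality := by
               intro n m f
               have h := s.ι.naturality f
               simp only [Functor.const_obj_obj, Functor.const_obj_map,
                 Category.comp_id] at h ⊢
               rw [← h]
               simp
               erw [coprod.inr_map_assoc] } }
  refine IsColimit.mk (fun s => coprod.desc (coprod.inl ≫ s.ι.app 0) (hF.desc (sF s)))
    (fun s n => ?_) (fun s m hm => ?_)
  · apply coprod.hom_ext
    · simp [inl_const s n]
      erw [coprod.inl_map_assoc, Category.id_comp, coprod.inl_desc]
    · have := hF.fac (sF s) n
      simp only [Functor.mapCocone_ι_app, Functor.comp_map] at this ⊢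
      simp [this]
      erw [coprod.inr_map_assoc, coprod.inr_desc]
      exact this
  · apply coprod.hom_ext
    · have := hm 0
      simp only [Functor.mapCocone_ι_app] at this
      rw [coprod.inl_desc, ← this]
      simp
      erw [coprod.inl_map_assoc, Category.id_comp]
    · rw [coprod.inr_desc]
      refine hF.uniq (sF s) _ (fun n => ?_)
      have := hm n
      simp only [Functor.mapCocone_ι_app, Functor.comp_map] at this ⊢
      change _ = coprod.inr ≫ s.ι.app n
      erw [← this]
      simp
      erw [coprod.inr_map_assoc]
end PlusF

end FreeAlgAux

/-- The free `Σ`-algebra on `X` is carried by the initial algebra `μY.(X + Σ Y)`,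
with structure map `in ∘ ι₂` and unit `in ∘ ι₁`: the `Σ`-algebra
`(M.a, coprod.inr ≫ M.str)` together with `coprod.inl ≫ M.str : X ⟶ M.a` enjoys the
universal property of the free `Σ`-algebra on `X`. -/
theorem free_algebra_is_initial_algebra_of_plus
    [HasFiniteCoproducts C] [HasColimitsOfShape ℕ C]
    (F : C ⥤ C) [PreservesColimitsOfShape ℕ F] [PreservesFiniteCoproducts F]
    (X : C) :
    ∃ M : Endofunctor.Algebra (plusF F X), Nonempty (IsInitial M) ∧
      ∀ (B : Endofunctor.Algebra F) (g : X ⟶ B.a),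
        ∃! h : M.a ⟶ B.a,
          ((coprod.inr ≫ M.str) ≫ h = F.map h ≫ B.str) ∧
          (coprod.inl ≫ M.str) ≫ h = g := by
  obtain ⟨M, ⟨hM⟩⟩ := FreeAlgAux.adamek (plusF F X) (fun c hc => FreeAlgAux.plusFPreserves F X hc)
  refine ⟨M, ⟨hM⟩, fun B g => ?_⟩
  let B' : Endofunctor.Algebra (plusF F X) := ⟨B.a, coprod.desc g B.str⟩
  have key : ∀ h : M.a ⟶ B.a,
      ((plusF F X).map h ≫ B'.str = M.str ≫ h) ↔
      (((coprod.inr ≫ M.str) ≫ h = F.map h ≫ B.str) ∧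
        (coprod.inl ≫ M.str) ≫ h = g) := by
    intro h
    constructor
    · intro hh
      constructor
      · have := congrArg (fun t => coprod.inr ≫ t) hh
        erw [Category.assoc, ← hh]
        simp only [plusF_map]
        erw [coprod.inr_map_assoc, coprod.inr_desc]
      · have := congrArg (fun t => coprod.inl ≫ t) hh
        erw [Category.assoc, ← hh]
        simp only [plusF_map]
        erw [coprod.inl_map_assoc, Category.id_comp, coprod.inl_desc]
    · rintro ⟨h1, h2⟩
      apply coprod.hom_ext
      · simp only [plusF_map]
        erw [coprod.inl_map_assoc, Category.id_comp, coprod.inl_desc, ← h2, Category.assoc]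
        rfl
      · simp only [plusF_map]
        erw [coprod.inr_map_assoc, coprod.inr_desc, ← h1, Category.assoc]
        rfl
  refine ⟨(hM.to B').f, (key _).1 (hM.to B').h, fun h' hh' => ?_⟩
  have : ({ f := h', h := (key h').2 hh' } : M ⟶ B') = hM.to B' :=
    hM.hom_ext _ _
  exact congrArg Endofunctor.Algebra.Hom.f this
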